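/- arXiv:1303.3162 — 3 statements merged into one kernel-verified Lean document; each statement's English description precedes it below -/
import Mathlib

section
/- Let Ω ⊆ ℂ be an open set, let σ : ℂ → ℝ be twice continuously differentiable on Ω with σ(z) > 0 for all z ∈ Ω, and let u : ℂ → ℂ be twice continuously differentiable on Ω satisfying the conductivity equation ∂ₓ(σ ∂ₓ u) + ∂_y(σ ∂_y u) = 0 on Ω. Then the function ψ : ℂ → ℂ defined by ψ(z) = √(σ(z)) · u(z) satisfies the Schrödinger equation Δψ(z) = q(z) ψ(z) for all z ∈ Ω, where q(z) = Δ(√σ)(z) / √(σ(z)). -/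
open Complex MeasureTheory

/-- Directional derivative in the direction `1` (the x-direction). -/
noncomputable def dx (f : ℂ → ℂ) (z : ℂ) : ℂ := fderiv ℝ f z 1

/-- Directional derivative in the direction `i` (the y-direction). -/
noncomputable def dy (f : ℂ → ℂ) (z : ℂ) : ℂ := fderiv ℝ f z Complex.I

/-- Laplacian `Δf = ∂ₓ²f + ∂_y²f`. -/
noncomputable def lap (f : ℂ → ℂ) (z : ℂ) : ℂ := dx (dx f) z + dy (dy f) z

/-- Wirtinger derivative `∂_z f = ½(∂ₓ f − i ∂_y f)`. -/
noncomputable def dz (f : ℂ → ℂ) (z : ℂ) : ℂ := (dx f z - Complex.I * dy f z) / 2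

/-- Wirtinger derivative `∂̄_z f = ½(∂ₓ f + i ∂_y f)`. -/
noncomputable def dbar (f : ℂ → ℂ) (z : ℂ) : ℂ := (dx f z + Complex.I * dy f z) / 2

lemma fd_mul' (f g : ℂ → ℂ) (z v : ℂ) (hf : DifferentiableAt ℝ f z)
    (hg : DifferentiableAt ℝ g z) :
    fderiv ℝ (fun w => f w * g w) z v = fderiv ℝ f z v * g z + f z * fderiv ℝ g z v := by
  rw [fderiv_fun_mul hf hg]; simp; ring

lemma diff_fd (Ω : Set ℂ) (hΩ : IsOpen Ω) (f : ℂ → ℂ) (hf : ContDiffOn ℝ 2 f Ω) (v : ℂ)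
    {z : ℂ} (hz : z ∈ Ω) :
    DifferentiableAt ℝ (fun w => fderiv ℝ f w v) z := by
  have h1 : ContDiffOn ℝ 1 (fun w => fderiv ℝ f w) Ω :=
    hf.fderiv_of_isOpen hΩ (by norm_num)
  exact (((h1.clm_apply contDiffOn_const).differentiableOn (by norm_num))).differentiableAt
    (hΩ.mem_nhds hz)

lemma diff_of_c2 (Ω : Set ℂ) (hΩ : IsOpen Ω) (f : ℂ → ℂ) (hf : ContDiffOn ℝ 2 f Ω)
    {z : ℂ} (hz : z ∈ Ω) : DifferentiableAt ℝ f z :=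
  ((hf.differentiableOn (by norm_num))).differentiableAt (hΩ.mem_nhds hz)

lemma fd2_mul (Ω : Set ℂ) (hΩ : IsOpen Ω) (f g : ℂ → ℂ) (hf : ContDiffOn ℝ 2 f Ω)
    (hg : ContDiffOn ℝ 2 g Ω) (v : ℂ) {z : ℂ} (hz : z ∈ Ω) :
    fderiv ℝ (fun w => fderiv ℝ (fun w' => f w' * g w') w v) z v
      = fderiv ℝ (fun w => fderiv ℝ f w v) z v * g z
        + 2 * (fderiv ℝ f z v * fderiv ℝ g z v)
        + f z * fderiv ℝ (fun w => fderiv ℝ g w v) z v := by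
  have heq : (fun w => fderiv ℝ (fun w' => f w' * g w') w v)
      =ᶠ[nhds z] (fun w => fderiv ℝ f w v * g w + f w * fderiv ℝ g w v) := by
    filter_upwards [hΩ.mem_nhds hz] with w hw
    exact fd_mul' f g w v (diff_of_c2 Ω hΩ f hf hw) (diff_of_c2 Ω hΩ g hg hw)
  rw [Filter.EventuallyEq.fderiv_eq heq]
  have d1 : DifferentiableAt ℝ (fun w => fderiv ℝ f w v) z := diff_fd Ω hΩ f hf v hz
  have d2 : DifferentiableAt ℝ (fun w => fderiv ℝ g w v) z := diff_fd Ω hΩ g hg v hz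
  have d3 : DifferentiableAt ℝ f z := diff_of_c2 Ω hΩ f hf hz
  have d4 : DifferentiableAt ℝ g z := diff_of_c2 Ω hΩ g hg hz
  have hadd : fderiv ℝ (fun w => fderiv ℝ f w v * g w + f w * fderiv ℝ g w v) z
      = fderiv ℝ (fun w => fderiv ℝ f w v * g w) z
        + fderiv ℝ (fun w => f w * fderiv ℝ g w v) z :=
    fderiv_add (d1.mul d4) (d3.mul d2)
  rw [hadd]
  have e1 := fd_mul' (fun w => fderiv ℝ f w v) g z v d1 d4
  have e2 := fd_mul' f (fun w => fderiv ℝ g w v) z v d3 d2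
  simp only [ContinuousLinearMap.add_apply, e1, e2]
  ring


/-- The substitution `ψ = √σ · u` transforms the conductivity equation into th
Schrödinger equation `Δψ = q ψ` with `q = Δ(√σ)/√σ`. -/
theorem conductivity_to_schrodinger
    (Ω : Set ℂ) (hΩ : IsOpen Ω) (σ : ℂ → ℝ) (u : ℂ → ℂ)
    (hσ : ContDiffOn ℝ 2 σ Ω) (hσpos : ∀ z ∈ Ω, 0 < σ z)
    (hu : ContDiffOn ℝ 2 u Ω)
    (hcond : ∀ z ∈ Ω,
      dx (fun w => (σ w : ℂ) * dx u w) z + dy (fun w => (σ w : ℂ) * dy u w) z = 0) :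
    ∀ z ∈ Ω,
      lap (fun w => (Real.sqrt (σ w) : ℂ) * u w) z
        = (lap (fun w => (Real.sqrt (σ w) : ℂ)) z / (Real.sqrt (σ z) : ℂ))
            * ((Real.sqrt (σ z) : ℂ) * u z) := by
  intro z hz
  set s : ℂ → ℂ := fun w => (Real.sqrt (σ w) : ℂ) with hs_def
  have hs : ContDiffOn ℝ 2 s Ω :=
    Complex.ofRealCLM.contDiff.comp_contDiffOn
      (hσ.sqrt fun x hx => (hσpos x hx).ne')
  have hsz : s z ≠ 0 := by
    simp only [hs_def, ne_eq, Complex.ofReal_eq_zero]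
    exact (Real.sqrt_pos.mpr (hσpos z hz)).ne'
  -- conductivity rewritten
  have hσeq : ∀ w ∈ Ω, (σ w : ℂ) = s w * s w := by
    intro w hw
    simp only [hs_def]
    rw [← Complex.ofReal_mul, Real.mul_self_sqrt (hσpos w hw).le]
  have hcz := hcond z hz
  have key : ∀ v : ℂ,
      fderiv ℝ (fun w => (σ w : ℂ) * fderiv ℝ u w v) z v
        = 2 * s z * fderiv ℝ s z v * fderiv ℝ u z v
          + s z * s z * fderiv ℝ (fun w => fderiv ℝ u w v) z v := by
    intro v
    have heq : (fun w => (σ w : ℂ) * fderiv ℝ u w v)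
        =ᶠ[nhds z] (fun w => (s w * s w) * fderiv ℝ u w v) := by
      filter_upwards [hΩ.mem_nhds hz] with w hw
      rw [hσeq w hw]
    rw [Filter.EventuallyEq.fderiv_eq heq]
    have ds : DifferentiableAt ℝ s z := diff_of_c2 Ω hΩ s hs hz
    have du : DifferentiableAt ℝ (fun w => fderiv ℝ u w v) z := diff_fd Ω hΩ u hu v hz
    have e1 := fd_mul' (fun w => s w * s w) (fun w => fderiv ℝ u w v) z v (ds.mul ds) du
    have e2 := fd_mul' s s z v ds ds
    rw [e1, e2]; ring
  have hc : 2 * s z * fderiv ℝ s z 1 * fderiv ℝ u z 1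
      + s z * s z * fderiv ℝ (fun w => fderiv ℝ u w 1) z 1
      + 2 * s z * fderiv ℝ s z Complex.I * fderiv ℝ u z Complex.I
      + s z * s z * fderiv ℝ (fun w => fderiv ℝ u w Complex.I) z Complex.I = 0 := by
    have := hcz
    simp only [dx, dy] at this
    rw [key 1, key Complex.I] at this
    linear_combination this
  have l1 := fd2_mul Ω hΩ s u hs hu 1 hz
  have lI := fd2_mul Ω hΩ s u hs hu Complex.I hz
  have hdx : ∀ f : ℂ → ℂ, dx f = fun w => fderiv ℝ f w 1 := fun f => rfl
  have hdy : ∀ f : ℂ → ℂ, dy f = fun w => fderiv ℝ f w Complex.I := fun f => rfl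
  simp only [lap, hdx, hdy, dx, dy]
  simp only [hs_def] at l1 lI hc hsz
  rw [l1, lI, div_mul_eq_mul_div, eq_div_iff hsz]
  linear_combination hc
end

section
/- Let Ω ⊆ ℂ be an open set, let γ : ℂ → ℂ be continuously differentiable and nonvanishing on Ω, and let g : ℂ → ℂ be continuously differentiable on Ω with g(z)² = γ(z) for all z ∈ Ω. Let u : ℂ → ℂ be twice continuously differentiable on Ω satisfying the conductivity equation ∂ₓ(γ ∂ₓ u) + ∂_y(γ ∂_y u) = 0 on Ω. Define Ψ₁₁(z) = g(z) ∂_z u(z) and Ψ₂₁(z) = g(z) ∂̄_z u(z). Then for all z ∈ Ω: ∂̄_z Ψ₁₁(z) = −( ∂_z γ(z) / (2 γ(z)) ) · Ψ₂₁(z) and ∂_z Ψ₂₁(z) = −( ∂̄_z γ(z) / (2 γ(z)) ) · Ψ₁₁(z); that is, the pair (Ψ₁₁, Ψ₂₁) satisfies the Brown–Uhlmann first-order system D Ψ = Q Ψ with Q₁₂ = −½ ∂_z log γ and Q₂₁ = −½ ∂̄_z log γ. -/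
open Complex MeasureTheory

/-- Directional derivative of a product. -/
lemma dirderiv_mul {f h : ℂ → ℂ} {z v : ℂ} (hf : DifferentiableAt ℝ f z)
    (hh : DifferentiableAt ℝ h z) :
    fderiv ℝ (fun w => f w * h w) z v = fderiv ℝ f z v * h z + f z * fderiv ℝ h z v := by
  rw [fderiv_fun_mul hf hh]
  simp only [ContinuousLinearMap.add_apply, ContinuousLinearMap.smul_apply, smul_eq_mul]
  ring

/-- Directional second derivative via the full second derivative. -/
lemma dirderiv_apply {u : ℂ → ℂ} {z : ℂ} (hF : DifferentiableAt ℝ (fderiv ℝ u) z) (v w : ℂ) :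
    fderiv ℝ (fun x => fderiv ℝ u x v) z w = fderiv ℝ (fderiv ℝ u) z w v := by
  rw [fderiv_clm_apply hF (differentiableAt_const v)]
  simp

/-- Directional derivative of `(a - I b)/2` type combination. -/
lemma dirderiv_comb {a b : ℂ → ℂ} {z v : ℂ} (c : ℂ) (ha : DifferentiableAt ℝ a z)
    (hb : DifferentiableAt ℝ b z) :
    fderiv ℝ (fun w => (a w + c * b w) / 2) z v
      = (fderiv ℝ a z v + c * fderiv ℝ b z v) / 2 := by
  have h : (fun w => (a w + c * b w) / 2) = fun w => (a w + c * b w) * (2 : ℂ)⁻¹ := by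
    funext w; rw [div_eq_mul_inv]
  have H : HasFDerivAt (fun w => (a w + c * b w) * (2 : ℂ)⁻¹)
      ((fderiv ℝ a z + c • fderiv ℝ b z).smulRight ((2 : ℂ)⁻¹) : ℂ →L[ℝ] ℂ) z := by
    have := (ha.hasFDerivAt.add ((hb.hasFDerivAt).const_mul c)).mul_const ((2 : ℂ)⁻¹)
    refine this.congr_fderiv ?_
    ext w
    simp [smul_eq_mul]
    ring
  rw [h, H.fderiv]
  simp only [ContinuousLinearMap.smulRight_apply, ContinuousLinearMap.add_apply,
    ContinuousLinearMap.smul_apply, smul_eq_mul]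
  field_simp

/-- The Brown–Uhlmann first-order system: with `Ψ₁₁ = γ^{1/2} ∂_z u` and
`Ψ₂₁ = γ^{1/2} ∂̄_z u`, a solution of the conductivity equation satisfies
`DΨ = QΨ` with `Q₁₂ = −½ ∂_z log γ`, `Q₂₁ = −½ ∂̄_z log γ`. -/
theorem brown_uhlmann_system
    (Ω : Set ℂ) (hΩ : IsOpen Ω) (γ g u : ℂ → ℂ)
    (hγ : ContDiffOn ℝ 1 γ Ω) (hγ0 : ∀ z ∈ Ω, γ z ≠ 0)
    (hg : ContDiffOn ℝ 1 g Ω) (hg2 : ∀ z ∈ Ω, g z ^ 2 = γ z)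
    (hu : ContDiffOn ℝ 2 u Ω)
    (hcond : ∀ z ∈ Ω,
      dx (fun w => γ w * dx u w) z + dy (fun w => γ w * dy u w) z = 0) :
    ∀ z ∈ Ω,
      dbar (fun w => g w * dz u w) z = -(dz γ z / (2 * γ z)) * (g z * dbar u z)
      ∧ dz (fun w => g w * dbar u w) z = -(dbar γ z / (2 * γ z)) * (g z * dz u z) := by
  intro z hz
  have hnz : Ω ∈ nhds z := hΩ.mem_nhds hz
  have hγz : ContDiffAt ℝ 1 γ z := hγ.contDiffAt hnz
  have hgz : ContDiffAt ℝ 1 g z := hg.contDiffAt hnz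
  have huz : ContDiffAt ℝ 2 u z := hu.contDiffAt hnz
  have hγd : DifferentiableAt ℝ γ z := hγz.differentiableAt one_ne_zero
  have hgd : DifferentiableAt ℝ g z := hgz.differentiableAt one_ne_zero
  have hFd : DifferentiableAt ℝ (fderiv ℝ u) z :=
    (huz.fderiv_right (m := 1) le_rfl).differentiableAt one_ne_zero
  -- differentiability of first derivatives
  have hdxu : DifferentiableAt ℝ (dx u) z :=
    hFd.clm_apply (differentiableAt_const (1 : ℂ))
  have hdyu : DifferentiableAt ℝ (dy u) z :=
    hFd.clm_apply (differentiableAt_const (Complex.I))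
  have hdzu : DifferentiableAt ℝ (fun w => dz u w) z := by
    have h : (fun w => dz u w) = fun w => (dx u w - Complex.I * dy u w) * (2:ℂ)⁻¹ := by
      funext w; simp [dz, div_eq_mul_inv]
    rw [h]
    exact (hdxu.sub (hdyu.const_mul Complex.I)).mul_const _
  have hdbaru : DifferentiableAt ℝ (fun w => dbar u w) z := by
    have h : (fun w => dbar u w) = fun w => (dx u w + Complex.I * dy u w) * (2:ℂ)⁻¹ := by
      funext w; simp [dbar, div_eq_mul_inv]
    rw [h]
    exact (hdxu.add (hdyu.const_mul Complex.I)).mul_const _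
  -- abbreviations for derivative values
  set D2 := fderiv ℝ (fderiv ℝ u) z with hD2
  set ux := dx u z
  set uy := dy u z
  set uxx := D2 1 1 with huxx
  set uxy := D2 1 Complex.I with huxy
  set uyx := D2 Complex.I 1 with huyx
  set uyy := D2 Complex.I Complex.I with huyy
  -- symmetry of second derivatives
  have hsym : uxy = uyx := (huz.isSymmSndFDerivAt (by simp [minSmoothness_of_isRCLikeNormedField])) 1 Complex.I
  -- second derivative computations
  have hxx : dx (dx u) z = uxx := dirderiv_apply hFd 1 1
  have hxy : dx (dy u) z = uxy := dirderiv_apply hFd Complex.I 1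
  have hyx : dy (dx u) z = uyx := dirderiv_apply hFd 1 Complex.I
  have hyy : dy (dy u) z = uyy := dirderiv_apply hFd Complex.I Complex.I
  -- derivatives of γ in terms of g
  have hev : γ =ᶠ[nhds z] (fun w => g w * g w) := by
    filter_upwards [hnz] with w hw
    rw [← hg2 w hw]; ring
  have hγx : dx γ z = 2 * g z * dx g z := by
    have h1 : fderiv ℝ γ z = fderiv ℝ (fun w => g w * g w) z := hev.fderiv_eq
    have h2 : fderiv ℝ (fun w => g w * g w) z 1 = fderiv ℝ g z 1 * g z + g z * fderiv ℝ g z 1 :=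
      dirderiv_mul hgd hgd
    show fderiv ℝ γ z 1 = _
    rw [h1, h2]; show _ = 2 * g z * fderiv ℝ g z 1; ring
  have hγy : dy γ z = 2 * g z * dy g z := by
    have h1 : fderiv ℝ γ z = fderiv ℝ (fun w => g w * g w) z := hev.fderiv_eq
    have h2 : fderiv ℝ (fun w => g w * g w) z Complex.I
        = fderiv ℝ g z Complex.I * g z + g z * fderiv ℝ g z Complex.I :=
      dirderiv_mul hgd hgd
    show fderiv ℝ γ z Complex.I = _
    rw [h1, h2]; show _ = 2 * g z * fderiv ℝ g z Complex.I; ring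
  -- conductivity equation expanded
  have hcx : dx (fun w => γ w * dx u w) z = dx γ z * ux + γ z * uxx := by
    have := dirderiv_mul (v := 1) hγd hdxu
    rw [show fderiv ℝ (fun w => dx u w) z 1 = dx (dx u) z from rfl, hxx] at this
    exact this
  have hcy : dy (fun w => γ w * dy u w) z = dy γ z * uy + γ z * uyy := by
    have := dirderiv_mul (v := Complex.I) hγd hdyu
    rw [show fderiv ℝ (fun w => dy u w) z Complex.I = dy (dy u) z from rfl, hyy] at this
    exact this
  have hc : dx γ z * ux + dy γ z * uy + γ z * (uxx + uyy) = 0 := by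
    have := hcond z hz
    rw [hcx, hcy] at this
    linear_combination this
  -- derivatives of dz u and dbar u
  have hdzux : dx (fun w => dz u w) z = (uxx - Complex.I * uxy) / 2 := by
    have := dirderiv_comb (a := dx u) (b := dy u) (v := 1) (-Complex.I) hdxu hdyu
    have h2 : dx (fun w => dz u w) z
        = fderiv ℝ (fun w => (dx u w + -Complex.I * dy u w) / 2) z 1 := by
      congr 1; funext w; unfold dz; ring_nf
    rw [h2, this, show fderiv ℝ (dx u) z 1 = dx (dx u) z from rfl,
      show fderiv ℝ (dy u) z 1 = dx (dy u) z from rfl, hxx, hxy]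
    ring
  have hdzuy : dy (fun w => dz u w) z = (uyx - Complex.I * uyy) / 2 := by
    have := dirderiv_comb (a := dx u) (b := dy u) (v := Complex.I) (-Complex.I) hdxu hdyu
    have h2 : dy (fun w => dz u w) z
        = fderiv ℝ (fun w => (dx u w + -Complex.I * dy u w) / 2) z Complex.I := by
      congr 1; funext w; unfold dz; ring_nf
    rw [h2, this, show fderiv ℝ (dx u) z Complex.I = dy (dx u) z from rfl,
      show fderiv ℝ (dy u) z Complex.I = dy (dy u) z from rfl, hyx, hyy]
    ring
  have hdbarux : dx (fun w => dbar u w) z = (uxx + Complex.I * uxy) / 2 := by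
    have := dirderiv_comb (a := dx u) (b := dy u) (v := 1) (Complex.I) hdxu hdyu
    have h2 : dx (fun w => dbar u w) z
        = fderiv ℝ (fun w => (dx u w + Complex.I * dy u w) / 2) z 1 := rfl
    rw [h2, this, show fderiv ℝ (dx u) z 1 = dx (dx u) z from rfl,
      show fderiv ℝ (dy u) z 1 = dx (dy u) z from rfl, hxx, hxy]
  have hdbaruy : dy (fun w => dbar u w) z = (uyx + Complex.I * uyy) / 2 := by
    have := dirderiv_comb (a := dx u) (b := dy u) (v := Complex.I) (Complex.I) hdxu hdyu
    have h2 : dy (fun w => dbar u w) z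
        = fderiv ℝ (fun w => (dx u w + Complex.I * dy u w) / 2) z Complex.I := rfl
    rw [h2, this, show fderiv ℝ (dx u) z Complex.I = dy (dx u) z from rfl,
      show fderiv ℝ (dy u) z Complex.I = dy (dy u) z from rfl, hyx, hyy]
  -- product rule for the Ψ functions
  have hP1x : dx (fun w => g w * dz u w) z = dx g z * dz u z + g z * dx (fun w => dz u w) z :=
    dirderiv_mul hgd hdzu
  have hP1y : dy (fun w => g w * dz u w) z = dy g z * dz u z + g z * dy (fun w => dz u w) z :=
    dirderiv_mul hgd hdzu
  have hP2x : dx (fun w => g w * dbar u w) z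
      = dx g z * dbar u z + g z * dx (fun w => dbar u w) z :=
    dirderiv_mul hgd hdbaru
  have hP2y : dy (fun w => g w * dbar u w) z
      = dy g z * dbar u z + g z * dy (fun w => dbar u w) z :=
    dirderiv_mul hgd hdbaru
  -- nonvanishing
  have hγ0' : γ z ≠ 0 := hγ0 z hz
  have hg0 : g z ≠ 0 := by
    intro h
    apply hγ0'
    rw [← hg2 z hz, h]; ring
  have hγg : γ z = g z ^ 2 := (hg2 z hz).symm
  -- reduce conductivity to g
  have hc' : 2 * dx g z * ux + 2 * dy g z * uy + g z * (uxx + uyy) = 0 := by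
    rw [hγx, hγy, hγg] at hc
    have h2 : g z * (2 * dx g z * ux + 2 * dy g z * uy + g z * (uxx + uyy)) = 0 := by
      linear_combination hc
    rcases mul_eq_zero.1 h2 with h | h
    · exact absurd h hg0
    · exact h
  constructor
  · have hrhs : -(dz γ z / (2 * γ z)) * (g z * dbar u z)
        = -((dx g z - Complex.I * dy g z) * (ux + Complex.I * uy)) / 4 := by
      show -((dx γ z - Complex.I * dy γ z) / 2 / (2 * γ z))
          * (g z * ((ux + Complex.I * uy) / 2)) = _
      rw [hγx, hγy, hγg]
      field_simp [hg0]
      ring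
    show (dx (fun w => g w * dz u w) z + Complex.I * dy (fun w => g w * dz u w) z) / 2 = _
    rw [hP1x, hP1y, hdzux, hdzuy, ← hsym, hrhs,
      show dz u z = (ux - Complex.I * uy) / 2 from rfl]
    linear_combination (1/4 : ℂ) * hc'
      + (-(2 * dy g z * uy + g z * uyy) / 4) * Complex.I_mul_I
  · have hrhs : -(dbar γ z / (2 * γ z)) * (g z * dz u z)
        = -((dx g z + Complex.I * dy g z) * (ux - Complex.I * uy)) / 4 := by
      show -((dx γ z + Complex.I * dy γ z) / 2 / (2 * γ z))
          * (g z * ((ux - Complex.I * uy) / 2)) = _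
      rw [hγx, hγy, hγg]
      field_simp [hg0]
      ring
    show (dx (fun w => g w * dbar u w) z - Complex.I * dy (fun w => g w * dbar u w) z) / 2 = _
    rw [hP2x, hP2y, hdbarux, hdbaruy, ← hsym, hrhs,
      show dbar u z = (ux + Complex.I * uy) / 2 from rfl]
    linear_combination (1/4 : ℂ) * hc'
      + (-(2 * dy g z * uy + g z * uyy) / 4) * Complex.I_mul_I
end

section
/- Let f : ℂ → ℂ be continuously differentiable with compact support. Then for every z ∈ ℂ, f(z) = (1/π) ∫_ℂ ∂̄_z f(ζ) / (z − ζ) dA(ζ), where dA denotes the Lebesgue area measure on ℂ and the integrand is interpreted as 0 at ζ = z (the singularity 1/(z − ζ) is locally integrable, so the integral converges absolutely). -/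
open Complex MeasureTheory Set

/-- Key algebraic identity for the polar-coordinates integrand. -/
theorem cp_alg (D : ℂ →L[ℝ] ℂ) (c s : ℝ) (h : c^2 + s^2 = 1) :
    -(((c:ℂ) + s * I))⁻¹ * ((D 1 + I * D I) / 2)
      = -(1/2 : ℂ) * D ((c:ℂ) + s * I) - (I/2) * D (I * ((c:ℂ) + s * I)) := by
  have hcs : (c:ℂ)^2 + (s:ℂ)^2 = 1 := by exact_mod_cast congrArg (Complex.ofReal) h
  have hinv : (((c:ℂ) + s * I))⁻¹ = (c:ℂ) - s * I := by
    rw [inv_eq_of_mul_eq_one_right]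
    linear_combination hcs - (s:ℂ)^2 * Complex.I_mul_I
  have hD1 : D ((c:ℂ) + s * I) = c • D 1 + s • D I := by
    rw [show ((c:ℂ) + s * I) = c • (1:ℂ) + s • I by simp [Complex.real_smul], map_add,
      D.map_smul, D.map_smul]
  have hD2 : D (I * ((c:ℂ) + s * I)) = (-s) • D 1 + c • D I := by
    rw [show (I * ((c:ℂ) + s * I)) = (-s) • (1:ℂ) + c • I by
      simp only [Complex.real_smul]
      push_cast
      linear_combination (s:ℂ) * Complex.I_mul_I, map_add, D.map_smul, D.map_smul]
  rw [hinv, hD1, hD2]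
  simp only [Complex.real_smul]
  push_cast
  linear_combination ((s:ℂ) * D I / 2) * Complex.I_mul_I

/-- A measurable function on `ℝ²` that is bounded and supported in a strip `r ≤ R`
is integrable on the polar-coordinate target. -/
theorem cp_aux_int {g : ℝ × ℝ → ℂ} (hg : AEStronglyMeasurable g volume) (M R : ℝ)
    (hbound : ∀ p, ‖g p‖ ≤ M) (hzero : ∀ p : ℝ × ℝ, R < p.1 → g p = 0) :
    IntegrableOn g (Ioi (0:ℝ) ×ˢ Ioo (-Real.pi) Real.pi) := by
  have hM : 0 ≤ M := le_trans (norm_nonneg _) (hbound (0,0))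
  set S : Set (ℝ × ℝ) := Ioc (0:ℝ) R ×ˢ Ioo (-Real.pi) Real.pi with hS
  have hSm : MeasurableSet S := (measurableSet_Ioc.prod measurableSet_Ioo)
  have hTm : MeasurableSet (Ioi (0:ℝ) ×ˢ Ioo (-Real.pi) Real.pi) :=
    measurableSet_Ioi.prod measurableSet_Ioo
  refine Integrable.mono' (g := S.indicator fun _ => M) ?_ hg.restrict ?_
  · rw [integrable_indicator_iff hSm]
    refine (integrableOn_const_iff (by finiteness)).2 (Or.inr ?_)
    calc (volume.restrict (Ioi (0:ℝ) ×ˢ Ioo (-Real.pi) Real.pi)) S ≤ volume S :=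
          Measure.restrict_apply_le _ _
      _ < ⊤ := by
          rw [hS, Measure.volume_eq_prod, Measure.prod_prod]
          exact ENNReal.mul_lt_top measure_Ioc_lt_top measure_Ioo_lt_top
  · rw [ae_restrict_iff' hTm]
    refine Filter.Eventually.of_forall (fun p hp => ?_)
    by_cases hpR : p.1 ≤ R
    · have hpS : p ∈ S := ⟨⟨(mem_prod.1 hp).1, hpR⟩, (mem_prod.1 hp).2⟩
      rw [Set.indicator_of_mem hpS]
      exact hbound p
    · rw [hzero p (lt_of_not_ge hpR)]
      simp only [norm_zero]
      exact Set.indicator_nonneg (fun _ _ => hM) _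

/-- Transfer integrability from polar coordinates back to `ℂ`. -/
theorem cp_integrable_of_polar {F : ℂ → ℂ}
    (hI : IntegrableOn (fun p : ℝ × ℝ => p.1 • F (Complex.polarCoord.symm p))
      polarCoord.target) : Integrable F := by
  rw [← (Complex.volume_preserving_equiv_real_prod.symm).integrable_comp_emb
    Complex.measurableEquivRealProd.symm.measurableEmbedding]
  set g : ℝ × ℝ → ℂ := F ∘ Complex.measurableEquivRealProd.symm with hg
  show Integrable g
  set B : ℝ × ℝ → ℝ × ℝ →L[ℝ] ℝ × ℝ := fun p =>
    LinearMap.toContinuousLinearMap (Matrix.toLin (Module.Basis.finTwoProd ℝ) (Module.Basis.finTwoProd ℝ)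
      !![Real.cos p.2, -p.1 * Real.sin p.2; Real.sin p.2, p.1 * Real.cos p.2]) with hB
  have B_det : ∀ p, (B p).det = p.1 := by
    intro p
    conv_rhs => rw [← one_mul p.1, ← Real.cos_sq_add_sin_sq p.2]
    simp only [hB, neg_mul, LinearMap.det_toContinuousLinearMap, LinearMap.det_toLin,
      Matrix.det_fin_two_of, sub_neg_eq_add]
    ring
  have key : IntegrableOn g polarCoord.source volume := by
    rw [← polarCoord.symm_image_target_eq_source]
    rw [integrableOn_image_iff_integrableOn_abs_det_fderiv_smul volume
      polarCoord.open_target.measurableSet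
      (fun p _ => (hasFDerivAt_polarCoord_symm p).hasFDerivWithinAt) polarCoord.symm.injOn g]
    refine hI.congr_fun (fun p hp => ?_) polarCoord.open_target.measurableSet
    rw [det_fderivPolarCoordSymm, abs_of_pos hp.1]
    rfl
  exact integrableOn_univ.mp (key.congr_set_ae polarCoord_source_ae_eq_univ.symm)

/-- Radial fundamental theorem of calculus for a compactly supported `C¹` function. -/
theorem cp_radial {f : ℂ → ℂ} (hf : ContDiff ℝ 1 f) (z : ℂ) (θ : ℝ) {R : ℝ}
    (hR : ∀ w : ℂ, R ≤ dist w z → fderiv ℝ f w = 0 ∧ f w = 0) :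
    ∫ r in Ioi (0:ℝ), fderiv ℝ f (z + r * Complex.exp (θ * I)) (Complex.exp (θ * I))
      = - f z := by
  set E : ℂ := Complex.exp (θ * I) with hE
  have hEnorm : ‖E‖ = 1 := by simp [hE, Complex.norm_exp_ofReal_mul_I]
  have hderiv : ∀ r : ℝ, HasDerivAt (fun r : ℝ => f (z + r * E))
      (fderiv ℝ f (z + r * E) E) r := by
    intro r
    have h1 : HasDerivAt (fun r : ℝ => z + (r : ℂ) * E) E r := by
      simpa using ((Complex.ofRealCLM.hasDerivAt (x := r)).mul_const E).const_add z
    exact ((hf.differentiable one_ne_zero _).hasFDerivAt).comp_hasDerivAt r h1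
  have hzero : ∀ r : ℝ, R ≤ r → fderiv ℝ f (z + r * E) = 0 ∧ f (z + r * E) = 0 := by
    intro r hr
    apply hR
    rw [dist_eq_norm]
    simp only [add_sub_cancel_left]
    rw [norm_mul, Complex.norm_real, hEnorm, mul_one]
    exact hr.trans (le_abs_self r)
  have hcont : Continuous fun r : ℝ => fderiv ℝ f (z + r * E) E := by
    have : Continuous fun r : ℝ => z + (r : ℝ) * E := by continuity
    exact ((hf.continuous_fderiv one_ne_zero).comp this).clm_apply continuous_const
  have hint : IntegrableOn (fun r : ℝ => fderiv ℝ f (z + r * E) E) (Ioi (0:ℝ)) := by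
    have hRnn : (0:ℝ) ≤ max R 0 := le_max_right _ _
    rw [← Ioc_union_Ioi_eq_Ioi hRnn]
    apply IntegrableOn.union
    · exact hcont.continuousOn.integrableOn_compact isCompact_Icc |>.mono_set Ioc_subset_Icc_self
    · refine (integrableOn_zero (μ := volume)).congr_fun (fun r hr => ?_) measurableSet_Ioi
      rw [(hzero r ((le_max_left R 0).trans (le_of_lt hr))).1]
      simp
  have htend : Filter.Tendsto (fun r : ℝ => f (z + r * E)) Filter.atTop (nhds 0) := by
    refine Filter.Tendsto.congr' ?_ tendsto_const_nhds
    filter_upwards [Filter.Ioi_mem_atTop R] with r hr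
    exact ((hzero r (le_of_lt hr)).2).symm
  have := integral_Ioi_of_hasDerivAt_of_tendsto' (f := fun r : ℝ => f (z + r * E))
    (fun x _ => hderiv x) hint htend
  rw [this]
  simp

/-- Angular integral of the derivative vanishes by periodicity. -/
theorem cp_angular {f : ℂ → ℂ} (hf : ContDiff ℝ 1 f) (z : ℂ) {r : ℝ} (hr : 0 < r) :
    ∫ θ in Ioo (-Real.pi) Real.pi,
      fderiv ℝ f (z + r * Complex.exp (θ * I)) (I * Complex.exp (θ * I)) = 0 := by
  have hderiv : ∀ θ : ℝ, HasDerivAt (fun θ : ℝ => f (z + r * Complex.exp (θ * I)))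
      (r • fderiv ℝ f (z + r * Complex.exp (θ * I)) (I * Complex.exp (θ * I))) θ := by
    intro θ
    have h1 : HasDerivAt (fun θ : ℝ => z + (r : ℂ) * Complex.exp (θ * I))
        ((r : ℂ) * (Complex.exp (θ * I) * I)) θ := by
      have h0 : HasDerivAt (fun θ : ℝ => (θ : ℂ) * I) I θ := by
        simpa using (Complex.ofRealCLM.hasDerivAt (x := θ)).mul_const I
      simpa using ((h0.cexp).const_mul (r : ℂ)).const_add z
    have := ((hf.differentiable one_ne_zero _).hasFDerivAt).comp_hasDerivAt θ h1
    rw [show (r : ℂ) * (Complex.exp (θ * I) * I) = r • (I * Complex.exp (θ * I)) by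
      rw [Complex.real_smul]; ring, (fderiv ℝ f _).map_smul] at this
    exact this
  have hcont : Continuous fun θ : ℝ =>
      r • fderiv ℝ f (z + r * Complex.exp (θ * I)) (I * Complex.exp (θ * I)) := by
    have hc1 : Continuous fun θ : ℝ => z + (r : ℂ) * Complex.exp (θ * I) := by continuity
    have hc2 : Continuous fun θ : ℝ => I * Complex.exp ((θ : ℂ) * I) := by continuity
    exact (((hf.continuous_fderiv one_ne_zero).comp hc1).clm_apply hc2).const_smul r
  have key := intervalIntegral.integral_eq_sub_of_hasDerivAt
      (f := fun θ : ℝ => f (z + r * Complex.exp (θ * I)))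
      (f' := fun θ : ℝ => r • fderiv ℝ f (z + r * Complex.exp (θ * I)) (I * Complex.exp (θ * I)))
      (a := -Real.pi) (b := Real.pi)
      (fun θ _ => hderiv θ) (hcont.intervalIntegrable _ _)
  have hends : f (z + r * Complex.exp ((Real.pi : ℝ) * I))
      - f (z + r * Complex.exp ((-Real.pi : ℝ) * I)) = 0 := by
    rw [show ((-Real.pi : ℝ) : ℂ) * I = -((Real.pi : ℝ) * I) by push_cast; ring, Complex.exp_neg,
      show ((Real.pi : ℝ) : ℂ) * I = Real.pi * I from rfl, Complex.exp_pi_mul_I]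
    norm_num
  rw [hends] at key
  have hle : (-Real.pi) ≤ Real.pi := by linarith [Real.pi_pos]
  rw [intervalIntegral.integral_of_le hle, integral_Ioc_eq_integral_Ioo, integral_smul] at key
  rcases smul_eq_zero.1 key with h | h
  · exact absurd h hr.ne'
  · exact h

/-- Cauchy–Pompeiu / solid Cauchy transform inversion of `∂̄`: for a `C¹`
compactly supported `f`, `f(z) = (1/π) ∫ ∂̄f(ζ)/(z − ζ) dA(ζ)`, the integral
converging absolutely. -/
theorem cauchy_pompeiu_compact_support
    (f : ℂ → ℂ) (hf : ContDiff ℝ 1 f) (hsupp : HasCompactSupport f) :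
    ∀ z : ℂ,
      Integrable (fun ζ : ℂ => dbar f ζ / (z - ζ))
      ∧ f z = (1 / Real.pi : ℝ) * ∫ ζ : ℂ, dbar f ζ / (z - ζ) := by
  intro z
  have hD : Continuous (fderiv ℝ f) := hf.continuous_fderiv one_ne_zero
  obtain ⟨M, hM⟩ := (hsupp.fderiv ℝ).exists_bound_of_continuous hD
  have hM0 : 0 ≤ M := le_trans (norm_nonneg _) (hM 0)
  obtain ⟨R₀, hR₀⟩ := hsupp.isBounded.subset_closedBall z
  set R : ℝ := R₀ + 1 with hRdef
  have hR : ∀ w : ℂ, R ≤ dist w z → fderiv ℝ f w = 0 ∧ f w = 0 := by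
    intro w hw
    have hnot : w ∉ tsupport f := by
      intro hmem
      have := hR₀ hmem
      rw [Metric.mem_closedBall] at this
      linarith
    constructor
    · by_contra h
      exact hnot (support_fderiv_subset ℝ (Function.mem_support.2 h))
    · exact image_eq_zero_of_notMem_tsupport hnot
  -- notation
  have hEcs : ∀ θ : ℝ, Complex.exp ((θ:ℂ) * I) = ↑(Real.cos θ) + ↑(Real.sin θ) * I := by
    intro θ
    rw [Complex.exp_mul_I, ← Complex.ofReal_cos, ← Complex.ofReal_sin]
  have hsymm : ∀ p : ℝ × ℝ, Complex.polarCoord.symm p = (p.1 : ℂ) * Complex.exp (p.2 * I) := by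
    intro p
    simp [Complex.exp_mul_I]
  have hdbar_eq : ∀ w : ℂ, dbar f w = (fderiv ℝ f w 1 + I * fderiv ℝ f w I) / 2 := fun w => rfl
  set F : ℂ → ℂ := fun ζ => dbar f ζ / (z - ζ) with hF
  set F₀ : ℂ → ℂ := fun ζ => F (z + ζ) with hF₀
  set G₁ : ℝ × ℝ → ℂ := fun p =>
    -(1/2 : ℂ) * fderiv ℝ f (z + p.1 * Complex.exp (p.2 * I)) (Complex.exp (p.2 * I)) with hG₁def
  set G₂ : ℝ × ℝ → ℂ := fun p =>
    -(I/2) * fderiv ℝ f (z + p.1 * Complex.exp (p.2 * I)) (I * Complex.exp (p.2 * I)) with hG₂def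
  set T : Set (ℝ × ℝ) := Ioi (0:ℝ) ×ˢ Ioo (-Real.pi) Real.pi with hTdef
  have hTmeas : MeasurableSet T := measurableSet_Ioi.prod measurableSet_Ioo
  -- continuity of the pieces
  have hcE : Continuous fun p : ℝ × ℝ => Complex.exp ((p.2 : ℂ) * I) :=
    Complex.continuous_exp.comp ((Complex.continuous_ofReal.comp continuous_snd).mul
      continuous_const)
  have hcW : Continuous fun p : ℝ × ℝ => z + (p.1 : ℂ) * Complex.exp ((p.2 : ℂ) * I) :=
    continuous_const.add ((Complex.continuous_ofReal.comp continuous_fst).mul hcE)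
  have hG₁cont : Continuous G₁ :=
    continuous_const.mul ((hD.comp hcW).clm_apply hcE)
  have hG₂cont : Continuous G₂ :=
    continuous_const.mul ((hD.comp hcW).clm_apply (continuous_const.mul hcE))
  -- bounds and support
  have hnormE : ∀ θ : ℝ, ‖Complex.exp ((θ:ℂ) * I)‖ = 1 := fun θ => by
    simp [Complex.norm_exp_ofReal_mul_I]
  have hzero' : ∀ p : ℝ × ℝ, R < p.1 →
      fderiv ℝ f (z + p.1 * Complex.exp (p.2 * I)) = 0 := by
    intro p hp
    refine (hR _ ?_).1
    rw [dist_eq_norm]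
    simp only [add_sub_cancel_left]
    rw [norm_mul, Complex.norm_real, hnormE, mul_one]
    exact le_trans (le_of_lt hp) (le_abs_self _)
  have hG₁int : IntegrableOn G₁ T := by
    refine cp_aux_int hG₁cont.aestronglyMeasurable M R (fun p => ?_) (fun p hp => ?_)
    · rw [hG₁def]
      calc ‖-(1/2 : ℂ) * fderiv ℝ f (z + p.1 * Complex.exp (p.2 * I)) (Complex.exp (p.2 * I))‖
          = (1/2) * ‖fderiv ℝ f (z + p.1 * Complex.exp (p.2 * I)) (Complex.exp (p.2 * I))‖ := by
            rw [norm_mul]; norm_num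
        _ ≤ (1/2) * (‖fderiv ℝ f (z + p.1 * Complex.exp (p.2 * I))‖ * ‖Complex.exp ((p.2:ℂ) * I)‖) := by
            gcongr
            exact (fderiv ℝ f _).le_opNorm _
        _ ≤ M := by rw [hnormE, mul_one]; linarith [hM (z + (p.1:ℂ) * Complex.exp ((p.2:ℂ) * I))]
    · rw [hG₁def]
      simp only
      rw [hzero' p hp]
      simp
  have hG₂int : IntegrableOn G₂ T := by
    refine cp_aux_int hG₂cont.aestronglyMeasurable M R (fun p => ?_) (fun p hp => ?_)
    · rw [hG₂def]
      calc ‖-(I/2) * fderiv ℝ f (z + p.1 * Complex.exp (p.2 * I)) (I * Complex.exp (p.2 * I))‖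
          = (1/2) * ‖fderiv ℝ f (z + p.1 * Complex.exp (p.2 * I)) (I * Complex.exp (p.2 * I))‖ := by
            rw [norm_mul]
            simp
        _ ≤ (1/2) * (‖fderiv ℝ f (z + p.1 * Complex.exp (p.2 * I))‖ * ‖I * Complex.exp ((p.2:ℂ) * I)‖) := by
            gcongr
            exact (fderiv ℝ f _).le_opNorm _
        _ ≤ M := by
            rw [norm_mul, Complex.norm_I, one_mul, hnormE, mul_one]
            linarith [hM (z + (p.1:ℂ) * Complex.exp ((p.2:ℂ) * I))]
    · rw [hG₂def]
      simp only
      rw [hzero' p hp]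
      simp
  -- pointwise identity on the target
  have hpt : ∀ p ∈ T, p.1 • F₀ (Complex.polarCoord.symm p) = G₁ p + G₂ p := by
    intro p hp
    have hp1 : (0:ℝ) < p.1 := hp.1
    have hp1' : ((p.1:ℝ) : ℂ) ≠ 0 := by exact_mod_cast hp1.ne'
    set E : ℂ := Complex.exp ((p.2:ℂ) * I) with hEdef
    have hE0 : E ≠ 0 := Complex.exp_ne_zero _
    rw [hsymm p]
    have hstep1 : p.1 • F₀ ((p.1 : ℂ) * Complex.exp (p.2 * I))
        = -E⁻¹ * ((fderiv ℝ f (z + p.1 * E) 1 + I * fderiv ℝ f (z + p.1 * E) I) / 2) := by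
      rw [hF₀, hF]
      simp only [Complex.real_smul, ← hEdef]
      rw [hdbar_eq]
      rw [show z - (z + (p.1:ℂ) * E) = -((p.1:ℂ) * E) by ring]
      field_simp
    rw [hstep1]
    have := cp_alg (fderiv ℝ f (z + p.1 * E)) (Real.cos p.2) (Real.sin p.2)
      (Real.cos_sq_add_sin_sq p.2)
    rw [← hEcs p.2, ← hEdef] at this
    rw [this, hG₁def, hG₂def]
    simp only [← hEdef]
    ring
  -- integrability of the polar integrand, hence of F₀ and F
  have hTpolar : polarCoord.target = T := rfl
  have hpolarint : IntegrableOn (fun p : ℝ × ℝ => p.1 • F₀ (Complex.polarCoord.symm p))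
      polarCoord.target := by
    rw [hTpolar]
    exact IntegrableOn.congr_fun (hG₁int.add hG₂int) (fun p hp => (hpt p hp).symm) hTmeas
  have hF₀int : Integrable F₀ := cp_integrable_of_polar hpolarint
  have hFint : Integrable F := by
    have := hF₀int.comp_add_left (-z)
    refine this.congr (Filter.Eventually.of_forall fun ζ => ?_)
    rw [hF₀]
    simp
  refine ⟨hFint, ?_⟩
  -- now compute the integral
  have hIoo : ((volume (Ioo (-Real.pi) Real.pi)).toReal : ℝ) = 2 * Real.pi := by
    rw [Real.volume_Ioo, ENNReal.toReal_ofReal (by linarith [Real.pi_pos])]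
    ring
  have hvol : (volume : Measure (ℝ × ℝ)).restrict T
      = (volume.restrict (Ioi (0:ℝ))).prod (volume.restrict (Ioo (-Real.pi) Real.pi)) := by
    rw [Measure.prod_restrict, ← Measure.volume_eq_prod, hTdef]
  have hG₁eval : ∫ p in T, G₁ p = (Real.pi : ℂ) * f z := by
    rw [hvol, integral_prod_symm G₁ (by rw [← hvol]; exact hG₁int)]
    have hinner : ∀ θ ∈ Ioo (-Real.pi) Real.pi,
        ∫ r in Ioi (0:ℝ), G₁ (r, θ) = (1/2 : ℂ) * f z := by
      intro θ _
      rw [hG₁def]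
      simp only
      rw [integral_const_mul, cp_radial hf z θ hR]
      ring
    rw [setIntegral_congr_fun measurableSet_Ioo hinner, setIntegral_const, measureReal_def, hIoo,
      Complex.real_smul]
    push_cast
    ring
  have hG₂eval : ∫ p in T, G₂ p = 0 := by
    rw [hvol, integral_prod G₂ (by rw [← hvol]; exact hG₂int)]
    have hinner : ∀ r ∈ Ioi (0:ℝ),
        ∫ θ in Ioo (-Real.pi) Real.pi, G₂ (r, θ) = 0 := by
      intro r hr
      rw [hG₂def]
      simp only
      rw [integral_const_mul, cp_angular hf z hr, mul_zero]
    rw [setIntegral_congr_fun measurableSet_Ioi hinner, integral_zero]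
  have hintegral : ∫ ζ : ℂ, F ζ = (Real.pi : ℂ) * f z := by
    calc ∫ ζ : ℂ, F ζ = ∫ ζ : ℂ, F₀ ζ := (integral_add_left_eq_self F z).symm
      _ = ∫ p in polarCoord.target, p.1 • F₀ (Complex.polarCoord.symm p) :=
          (Complex.integral_comp_polarCoord_symm F₀).symm
      _ = ∫ p in T, (G₁ p + G₂ p) := by
          rw [hTpolar]
          exact setIntegral_congr_fun hTmeas hpt
      _ = (∫ p in T, G₁ p) + ∫ p in T, G₂ p := integral_add hG₁int hG₂int
      _ = (Real.pi : ℂ) * f z := by rw [hG₁eval, hG₂eval, add_zero]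
  rw [show (∫ ζ : ℂ, dbar f ζ / (z - ζ)) = ∫ ζ : ℂ, F ζ from rfl, hintegral]
  have hpi : (Real.pi : ℂ) ≠ 0 := by exact_mod_cast Real.pi_ne_zero
  push_cast
  field_simp
end
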